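/- In a semimodular lattice of finite length, any two maximal chains between the same pair of elements have the same length (the Jordan–Hölder chain condition). -/

import Mathlib

/-- A lattice is (upper) semimodular if `a ⊓ b ⋖ a` implies `b ⋖ a ⊔ b`. -/
def IsSemimodularLattice (α : Type*) [Lattice α] : Prop :=
  ∀ a b : α, a ⊓ b ⋖ a → b ⋖ a ⊔ b

/-- A maximal chain from `x` to `y` of length `m`: a chain
`x = c 0 ⋖ c 1 ⋖ ... ⋖ c m = y`. -/
def IsMaximalChain {α : Type*} [Lattice α] {m : ℕ} (c : Fin (m + 1) → α) (x y : α) : Prop :=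
  c 0 = x ∧ c (Fin.last m) = y ∧ ∀ i : Fin m, c i.castSucc ⋖ c i.succ

/-- Inductive version of a maximal chain of length `n` from `x` to `y`. -/
inductive MChain {α : Type*} [Lattice α] : α → α → ℕ → Prop
  | refl (x : α) : MChain x x 0
  | cons {x z y : α} {n : ℕ} (h : x ⋖ z) (h' : MChain z y n) : MChain x y (n + 1)

theorem MChain.le {α : Type*} [Lattice α] {x y : α} {n : ℕ} (h : MChain x y n) : x ≤ y := by
  induction h with
  | refl => exact le_rfl
  | cons h h' ih => exact h.le.trans ih

/-- Interpolation: given a maximal chain from `x` to `y` of length `m` and `x ≤ z ≤ y`,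
there is a maximal chain from `z` to `y` of length at most `m`. -/
theorem MChain.interp {α : Type*} [Lattice α] (hsm : IsSemimodularLattice α)
    {x y : α} {m : ℕ} (h : MChain x y m) : ∀ z, x ≤ z → z ≤ y → ∃ k ≤ m, MChain z y k := by
  induction h with
  | refl x => exact fun z h1 h2 => ⟨0, le_rfl, le_antisymm h2 h1 ▸ MChain.refl z⟩
  | @cons x a y n hxa h' ih =>
    intro z hxz hzy
    rcases eq_or_lt_of_le hxz with rfl | hlt
    · exact ⟨n + 1, le_rfl, MChain.cons hxa h'⟩
    · -- z > x
      rcases (le_inf hxa.le hlt.le : x ≤ a ⊓ z).lt_or_eq with hq | hq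
      · -- a ⊓ z = a, i.e. a ≤ z
        have haz : a ≤ z := by
          have heq : a ⊓ z = a :=
            ((lt_or_eq_of_le (inf_le_left : a ⊓ z ≤ a)).resolve_left (hxa.2 hq))
          rw [← heq]; exact inf_le_right
        obtain ⟨k, hk, hch⟩ := ih z haz hzy
        exact ⟨k, hk.trans (Nat.le_succ n), hch⟩
      · -- a ⊓ z = x, use semimodularity
        have hcov : a ⊓ z ⋖ a := hq ▸ hxa
        have hz : z ⋖ a ⊔ z := hsm a z hcov
        have hay : a ≤ y := h'.le
        obtain ⟨k, hk, hch⟩ := ih (a ⊔ z) le_sup_left (sup_le hay hzy)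
        exact ⟨k + 1, Nat.succ_le_succ hk, MChain.cons hz hch⟩

theorem MChain.unique {α : Type*} [Lattice α] (hsm : IsSemimodularLattice α) :
    ∀ m {x y : α} {n : ℕ}, MChain x y m → MChain x y n → m = n := by
  intro m
  induction m using Nat.strong_induction_on with
  | _ m ih =>
    intro x y n h1 h2
    cases h1 with
    | refl =>
      cases h2 with
      | refl => rfl
      | cons hb h2' => exact absurd h2'.le (not_le_of_gt hb.lt)
    | @cons _ a _ m' ha h1' =>
      cases h2 with
      | refl => exact absurd h1'.le (not_le_of_gt ha.lt)
      | @cons _ b _ n' hb h2' =>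
        rcases eq_or_ne a b with rfl | hab
        · exact congrArg Nat.succ (ih m' (Nat.lt_succ_self m') h1' h2')
        · -- a ⊓ b = x
          have hinf : a ⊓ b = x := by
            rcases (le_inf ha.le hb.le : x ≤ a ⊓ b).lt_or_eq with hq | hq
            · exfalso
              have h1 : a ⊓ b = a :=
                ((lt_or_eq_of_le (inf_le_left : a ⊓ b ≤ a)).resolve_left (ha.2 hq))
              have h2 : a ≤ b := h1 ▸ inf_le_right
              exact hab ((lt_or_eq_of_le h2).resolve_left (hb.2 ha.lt))
            · exact hq.symm
          have hcova : b ⊓ a ⋖ b := by rwa [inf_comm, hinf]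
          have hcovb : a ⊓ b ⋖ a := by rwa [hinf]
          have hbz : b ⋖ a ⊔ b := hsm a b hcovb
          have haz : a ⋖ a ⊔ b := by rw [sup_comm]; exact hsm b a hcova
          obtain ⟨k, hk, hch⟩ := h1'.interp hsm (a ⊔ b) le_sup_left
            (sup_le h1'.le h2'.le)
          have e1 : m' = k + 1 := ih m' (Nat.lt_succ_self m') h1' (MChain.cons haz hch)
          have e2 : k + 1 = n' := by
            refine ih (k + 1) ?_ (MChain.cons hbz hch) h2'
            omega
          omega

theorem IsMaximalChain.toMChain {α : Type*} [Lattice α] :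
    ∀ {m : ℕ} {c : Fin (m + 1) → α} {x y : α}, IsMaximalChain c x y → MChain x y m := by
  intro m
  induction m with
  | zero =>
    intro c x y ⟨h0, h1, _⟩
    have : x = y := by rw [← h0, ← h1]; rfl
    exact this ▸ MChain.refl x
  | succ m ih =>
    intro c x y ⟨h0, h1, hstep⟩
    have hx1 : x ⋖ c 1 := by
      have := hstep 0
      simpa [h0] using this
    refine MChain.cons hx1 (ih (c := fun i => c i.succ) ⟨rfl, ?_, ?_⟩)
    · rw [← h1]; congr 1
    · intro i
      have := hstep i.succ
      simpa only [Fin.succ_castSucc] using this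

/-- Jordan–Hölder chain condition: in a semimodular lattice, any two maximal chains
between the same pair of elements have the same length. -/
theorem semimodular_jordan_holder {α : Type*} [Lattice α]
    (hsm : IsSemimodularLattice α) {m n : ℕ} (x y : α)
    (c : Fin (m + 1) → α) (d : Fin (n + 1) → α)
    (hc : IsMaximalChain c x y) (hd : IsMaximalChain d x y) : m = n :=
  MChain.unique hsm m hc.toMChain hd.toMChain
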